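/- The equation q₁(c) = q₂(c), where q₁(c) = π/(4(√(1−c²) − c·arccos c)) and q₂(c) = 5/(2(7c − 2 − 10/π)), has exactly one root in the interval ((2π+10)/(7π), 1). -/

import Mathlib

open Real

noncomputable def q₁ (c : ℝ) : ℝ := π / (4 * (Real.sqrt (1 - c^2) - c * Real.arccos c))

noncomputable def q₂ (c : ℝ) : ℝ := 5 / (2 * (7 * c - 2 - 10 / π))

noncomputable def hfun (c : ℝ) : ℝ :=
  7 * π * c - 2 * π - 10 - 10 * Real.sqrt (1 - c ^ 2) + 10 * c * Real.arccos c

lemma f_pos {c : ℝ} (h0 : 0 < c) (h1 : c < 1) :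
    0 < Real.sqrt (1 - c ^ 2) - c * Real.arccos c := by
  set θ := Real.arccos c with hθ
  have hθ0 : 0 < θ := Real.arccos_pos.2 h1
  have hθlt : θ < π / 2 := Real.arccos_lt_pi_div_two.2 h0
  have htan := Real.lt_tan hθ0 hθlt
  have hcos : Real.cos θ = c := Real.cos_arccos (by linarith) (by linarith)
  have hsin : Real.sin θ = Real.sqrt (1 - c ^ 2) := Real.sin_arccos c
  rw [Real.tan_eq_sin_div_cos, hcos, lt_div_iff₀ h0] at htan
  nlinarith [htan, hsin]

lemma hasDerivAt_hfun {c : ℝ} (h0 : -1 < c) (h1 : c < 1) :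
    HasDerivAt hfun (7 * π + 10 * Real.arccos c) c := by
  have hc2 : (0:ℝ) < 1 - c ^ 2 := by nlinarith
  have hs : Real.sqrt (1 - c ^ 2) ≠ 0 := by positivity
  have d1 : HasDerivAt (fun x : ℝ => 1 - x ^ 2) (-(2 * c)) c := by
    simpa using ((hasDerivAt_pow 2 c).const_sub 1)
  have d2 : HasDerivAt (fun x : ℝ => Real.sqrt (1 - x ^ 2))
      (1 / (2 * Real.sqrt (1 - c ^ 2)) * -(2 * c)) c :=
    (Real.hasDerivAt_sqrt (ne_of_gt hc2)).comp c d1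
  have d3 : HasDerivAt Real.arccos (-(1 / Real.sqrt (1 - c ^ 2))) c :=
    Real.hasDerivAt_arccos (by linarith) (by linarith)
  have d4 : HasDerivAt (fun x : ℝ => 7 * π * x - 2 * π - 10)
      (7 * π) c := by
    simpa using (((hasDerivAt_id c).const_mul (7 * π)).sub_const (2 * π)).sub_const 10
  have d5 : HasDerivAt (fun x : ℝ => 10 * x * Real.arccos x)
      (10 * Real.arccos c + 10 * c * -(1 / Real.sqrt (1 - c ^ 2))) c := by
    have := (((hasDerivAt_id c).const_mul (10:ℝ)).mul d3)
    exact this.congr_deriv (by simp)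
  have dtot := (d4.sub (d2.const_mul 10)).add d5
  refine dtot.congr_deriv ?_
  field_simp
  ring

lemma continuous_hfun : Continuous hfun := by
  unfold hfun
  have h1 : Continuous fun c : ℝ => Real.sqrt (1 - c ^ 2) :=
    Real.continuous_sqrt.comp (by continuity)
  have h2 : Continuous fun c : ℝ => Real.arccos c := Real.continuous_arccos
  continuity

lemma strictMono_hfun :
    StrictMonoOn hfun (Set.Icc ((2 * π + 10) / (7 * π)) 1) := by
  have hlo : (0:ℝ) < (2 * π + 10) / (7 * π) := by positivity
  apply strictMonoOn_of_deriv_pos (convex_Icc _ _) continuous_hfun.continuousOn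
  · intro x hx
    rw [interior_Icc] at hx
    have h0 : -1 < x := by linarith [hx.1, hlo]
    have h1 : x < 1 := hx.2
    rw [(hasDerivAt_hfun h0 h1).deriv]
    have := Real.arccos_nonneg x
    have := Real.pi_pos
    nlinarith

theorem q1_eq_q2_unique_root :
    ∃! c : ℝ, c ∈ Set.Ioo ((2 * π + 10) / (7 * π)) 1 ∧ q₁ c = q₂ c := by
  have hπ : (0:ℝ) < π := Real.pi_pos
  have hπ3 : (3:ℝ) < π := Real.pi_gt_three
  set lo := (2 * π + 10) / (7 * π) with hlo_def
  have hlo_pos : 0 < lo := by positivity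
  have hlo_lt : lo < 1 := by
    rw [hlo_def, div_lt_one (by positivity)]
    linarith
  have hlo_eq : 7 * π * lo = 2 * π + 10 := by
    rw [hlo_def]; field_simp
  -- key equivalence : for c in the interval, q₁ c = q₂ c ↔ hfun c = 0
  have key : ∀ c ∈ Set.Ioo lo 1, (q₁ c = q₂ c ↔ hfun c = 0) := by
    intro c hc
    have hc0 : 0 < c := lt_trans hlo_pos hc.1
    have hc1 : c < 1 := hc.2
    have hf : 0 < Real.sqrt (1 - c ^ 2) - c * Real.arccos c := f_pos hc0 hc1
    have hg : 0 < 7 * c - 2 - 10 / π := by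
      have : lo < c := hc.1
      rw [hlo_def, div_lt_iff₀ (by positivity)] at this
      rw [sub_pos, div_lt_iff₀ hπ]
      nlinarith
    rw [q₁, q₂, div_eq_div_iff (by positivity) (by positivity)]
    have hexp : π * (2 * (7 * c - 2 - 10 / π)) = 2 * (7 * π * c - 2 * π - 10) := by
      field_simp
    rw [hexp, hfun]
    constructor <;> intro h <;> nlinarith [h]
  -- hfun values at endpoints
  have hlo_neg : hfun lo < 0 := by
    have hf := f_pos hlo_pos hlo_lt
    rw [hfun, hlo_eq]
    nlinarith
  have h1_pos : 0 < hfun 1 := by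
    have hs : Real.sqrt (1 - (1:ℝ) ^ 2) = 0 := by norm_num
    rw [hfun, hs, Real.arccos_one]
    nlinarith
  have hcont : ContinuousOn hfun (Set.Icc lo 1) := continuous_hfun.continuousOn
  -- existence via IVT
  have hmem : (0:ℝ) ∈ Set.Ioo (hfun lo) (hfun 1) := ⟨hlo_neg, h1_pos⟩
  have hsub := intermediate_value_Ioo (le_of_lt hlo_lt) hcont
  obtain ⟨c, hcmem, hc0⟩ := hsub hmem
  refine ⟨c, ⟨hcmem, (key c hcmem).2 hc0⟩, ?_⟩
  rintro y ⟨hymem, hyeq⟩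
  have hy0 : hfun y = 0 := (key y hymem).1 hyeq
  have hmono := strictMono_hfun
  rw [← hlo_def] at hmono
  exact hmono.injOn (Set.mem_Icc.2 ⟨le_of_lt hymem.1, le_of_lt hymem.2⟩)
    (Set.mem_Icc.2 ⟨le_of_lt hcmem.1, le_of_lt hcmem.2⟩) (by rw [hy0, hc0])
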